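/- Let H_1, H_2, H_3 be graphs on h_1, h_2, h_3 vertices respectively, with h_1, h_2, h_3 ≤ h. For any n ≥ 27^{h²}, any 3-coloring of E(K_n) with colors red, blue, and yellow contains at least 27^{−h²}·(n)_{h_1} red labeled copies of H_1, or at least 27^{−h²}·(n)_{h_2} blue labeled copies of H_2, or at least 27^{−h²}·(n)_{h_3} yellow labeled copies of H_3. -/

import Mathlib

open Filter
open Finset


/-- Labeled copies of `F` in coloring `χ` with all edges of color `col`, image in `S`. -/
noncomputable def colorCopiesIn {α : Type*} [Fintype α] (F : SimpleGraph α)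
    {n c : ℕ} (χ : Sym2 (Fin n) → Fin c) (col : Fin c) (S : Set (Fin n)) : ℕ :=
  Set.ncard {f : α → Fin n | Function.Injective f ∧ (∀ v, f v ∈ S) ∧
    ∀ v w, F.Adj v w → χ s(f v, f w) = col}

noncomputable def colorCopies {α : Type*} [Fintype α] (F : SimpleGraph α)
    {n c : ℕ} (χ : Sym2 (Fin n) → Fin c) (col : Fin c) : ℕ :=
  colorCopiesIn F χ col Set.univ

/-- Monochromatic labeled copies of `F` in `χ`. -/
noncomputable def monoCopies {α : Type*} [Fintype α] (F : SimpleGraph α)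
    {n c : ℕ} (χ : Sym2 (Fin n) → Fin c) : ℕ :=
  Set.ncard {f : α → Fin n | Function.Injective f ∧
    ∃ col : Fin c, ∀ v w, F.Adj v w → χ s(f v, f w) = col}

/-- Minimum number of monochromatic labeled copies of `F` over all `c`-colorings of `E(K_n)`. -/
noncomputable def minMono {α : Type*} [Fintype α] (F : SimpleGraph α) (n c : ℕ) : ℕ :=
  ⨅ χ : Sym2 (Fin n) → Fin c, monoCopies F χ

/-- Degree of `v` in color `col`. -/
noncomputable def colorDeg {n c : ℕ} (χ : Sym2 (Fin n) → Fin c) (col : Fin c) (v : Fin n) : ℕ :=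
  Set.ncard {w : Fin n | w ≠ v ∧ χ s(v, w) = col}

/-- `H` is `k`-critical. -/
def IsKCritical {α : Type*} (H : SimpleGraph α) (k : ℕ) : Prop :=
  H.chromaticNumber = (k : ℕ∞) ∧
    ∃ e ∈ H.edgeSet, (H.deleteEdges {e}).chromaticNumber = ((k - 1 : ℕ) : ℕ∞)

/-- Every vertex outside `s` is a pendant vertex whose unique neighbor lies in `s`. -/
def PendantOutside {α : Type*} (H : SimpleGraph α) (s : Finset α) : Prop :=
  ∀ v ∉ s, ∃ w ∈ s, H.neighborSet v = {w}

/-- The Turán coloring of `E(K_n)` with `k-1` parts: edges within parts red (`0`),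
edges between parts blue (`1`). -/
def turanColoring (n k : ℕ) : Sym2 (Fin n) → Fin 2 :=
  Sym2.lift ⟨fun i j => if i.val % (k - 1) = j.val % (k - 1) then 0 else 1,
    fun i j => by
      dsimp only
      by_cases h : i.val % (k - 1) = j.val % (k - 1)
      · rw [if_pos h, if_pos h.symm]
      · rw [if_neg h, if_neg fun h' => h h'.symm]⟩


lemma ramsey_aux (N : ℕ) : ∀ (m : ℕ) (χ : Sym2 (Fin m) → Fin 3) (sz : Fin 3 → ℕ)
    (S : Finset (Fin m)), sz 0 + sz 1 + sz 2 ≤ N → (∀ i, 1 ≤ sz i) →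
    3 ^ (sz 0 + sz 1 + sz 2 - 2) ≤ S.card →
    ∃ (col : Fin 3) (T : Finset (Fin m)), T ⊆ S ∧ T.card = sz col ∧
      ∀ v ∈ T, ∀ w ∈ T, v ≠ w → χ s(v, w) = col := by
  induction N with
  | zero => intro m χ sz S hN h1 _; have := h1 0; have := h1 1; have := h1 2; omega
  | succ N ih =>
    intro m χ sz S hN h1 hcard
    classical
    have hSne : S.Nonempty := by
      rw [← Finset.card_pos]; exact lt_of_lt_of_le (Nat.pow_pos (by norm_num)) hcard
    obtain ⟨v, hv⟩ := hSne
    by_cases hone : ∃ j, sz j = 1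
    · obtain ⟨j, hj⟩ := hone
      exact ⟨j, {v}, by simpa using hv, by simp [hj], by
        intro a ha b hb hab
        simp only [Finset.mem_singleton] at ha hb
        exact absurd (ha.trans hb.symm) hab⟩
    · push_neg at hone
      have h2 : ∀ j, 2 ≤ sz j := by
        intro j; have := h1 j; have := hone j; omega
      set P : Fin 3 → Finset (Fin m) := fun i => (S.erase v).filter (fun w => χ s(v, w) = i)
        with hP
      have hsum : (S.erase v).card = ∑ i : Fin 3, (P i).card :=
        Finset.card_eq_sum_card_fiberwise (fun w _ => Finset.mem_univ _)
      set e := sz 0 + sz 1 + sz 2 - 2 with he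
      have he1 : 1 ≤ e := by have := h2 0; have := h2 1; have := h2 2; omega
      have hbig : ∃ i, 3 ^ (e - 1) ≤ (P i).card := by
        by_contra hcon
        push_neg at hcon
        have hs : ∑ i : Fin 3, (P i).card ≤ 3 * (3 ^ (e - 1) - 1) := by
          rw [Fin.sum_univ_three]
          have := hcon 0; have := hcon 1; have := hcon 2; omega
        have hee : 3 * 3 ^ (e - 1) = 3 ^ e := by
          conv_rhs => rw [show e = (e - 1) + 1 by omega]
          ring
        have hc3 : (S.erase v).card = S.card - 1 := Finset.card_erase_of_mem hv
        have hpos : 1 ≤ 3 ^ (e-1) := Nat.one_le_two_pow.trans (Nat.pow_le_pow_left (by norm_num) _) 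
        omega
      obtain ⟨i, hi⟩ := hbig
      set sz' := Function.update sz i (sz i - 1) with hsz'
      have hui : sz' i = sz i - 1 := by simp [hsz']
      have hun : ∀ j, j ≠ i → sz' j = sz j := fun j hj => Function.update_of_ne hj _ _
      have hI : i = 0 ∨ i = 1 ∨ i = 2 := by fin_cases i <;> simp
      have hsum' : sz' 0 + sz' 1 + sz' 2 = sz 0 + sz 1 + sz 2 - 1 := by
        have := h2 i
        rcases hI with rfl | rfl | rfl
        · rw [hun 1 (by decide), hun 2 (by decide)]; omega
        · rw [hun 0 (by decide), hun 2 (by decide)]; omega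
        · rw [hun 0 (by decide), hun 1 (by decide)]; omega
      obtain ⟨col, T, hTsub, hTcard, hTmono⟩ := ih m χ sz' (P i)
        (by omega) (by
          intro j; by_cases hj : j = i
          · subst hj; rw [hui]; have := h2 j; omega
          · rw [hun j hj]; exact h1 j)
        (by
          have : sz' 0 + sz' 1 + sz' 2 - 2 = e - 1 := by omega
          rw [this]; exact hi)
      have hPsub : P i ⊆ S := (Finset.filter_subset _ _).trans (Finset.erase_subset _ _)
      by_cases hc : col = i
      · subst hc
        refine ⟨col, insert v T, ?_, ?_, ?_⟩
        · intro x hx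
          rcases Finset.mem_insert.mp hx with rfl | hx
          · exact hv
          · exact hPsub (hTsub hx)
        · have hvT : v ∉ T := fun hvt => Finset.notMem_erase v S
            (Finset.mem_of_mem_filter v (hTsub hvt))
          rw [Finset.card_insert_of_notMem hvT, hTcard, hui]
          have := h2 col; omega
        · intro a ha b hb hab
          rcases Finset.mem_insert.mp ha with rfl | ha' <;>
            rcases Finset.mem_insert.mp hb with rfl | hb'
          · exact absurd rfl hab
          · have := hTsub hb'
            rw [hP] at this
            exact (Finset.mem_filter.mp this).2
          · have := hTsub ha'
            rw [hP] at this
            rw [Sym2.eq_swap]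
            exact (Finset.mem_filter.mp this).2
          · exact hTmono a ha' b hb' hab
      · refine ⟨col, T, hTsub.trans hPsub, ?_, hTmono⟩
        rw [hTcard, hsz', Function.update_of_ne hc]


lemma ext_count (t n a : ℕ) (σ : Fin a ↪ Fin t) (c : Fin a → Fin n) :
    (Finset.univ.filter fun f : Fin t ↪ Fin n => ∀ x, f (σ x) = c x).card ≤
      (n - a).descFactorial (t - a) := by
  classical
  rcases Finset.eq_empty_or_nonempty
    (Finset.univ.filter fun f : Fin t ↪ Fin n => ∀ x, f (σ x) = c x) with hemp | ⟨f0, hf0⟩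
  · rw [hemp]; simp
  · have hf0' : ∀ x, f0 (σ x) = c x := (Finset.mem_filter.mp hf0).2
    have hcinj : Function.Injective c := by
      intro x y hxy
      apply σ.injective
      apply f0.injective
      rw [hf0' x, hf0' y, hxy]
    have key : (Finset.univ.filter fun f : Fin t ↪ Fin n => ∀ x, f (σ x) = c x).card =
        Fintype.card {f : Fin t ↪ Fin n // ∀ x, f (σ x) = c x} := by
      rw [Fintype.card_subtype]
    rw [key]
    have Φinj : Function.Injective (fun fp : {f : Fin t ↪ Fin n // ∀ x, f (σ x) = c x} =>
        (⟨fun x : {x : Fin t // x ∉ Set.range σ} =>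
          (⟨fp.1 x.1, by
            rintro ⟨y, hy⟩
            exact x.2 ⟨y, fp.1.injective (by rw [fp.2 y, hy])⟩⟩ :
              {z : Fin n // z ∉ Set.range c}),
          by
            intro x y hxy
            exact Subtype.ext (fp.1.injective (congrArg Subtype.val hxy))⟩ :
          {x : Fin t // x ∉ Set.range σ} ↪ {z : Fin n // z ∉ Set.range c})) := by
      rintro ⟨f, hf⟩ ⟨g, hg⟩ hfg
      simp only [Function.Embedding.mk.injEq] at hfg
      apply Subtype.ext
      apply Function.Embedding.ext
      intro x
      by_cases hx : x ∈ Set.range σ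
      · obtain ⟨y, rfl⟩ := hx
        rw [hf y, hg y]
      · have := DFunLike.congr_fun hfg ⟨x, hx⟩
        exact congrArg Subtype.val this
    have hle := Fintype.card_le_of_injective _ Φinj
    refine hle.trans ?_
    rw [Fintype.card_embedding_eq]
    have c1 : Fintype.card {x : Fin t // x ∉ Set.range σ} = t - a := by
      rw [Fintype.card_subtype_compl]
      congr 1
      · exact Fintype.card_fin t
      · rw [show Fintype.card {x : Fin t // x ∈ Set.range σ} =
            Fintype.card (Set.range σ) from rfl,
          ← Fintype.card_congr (Equiv.ofInjective σ σ.injective), Fintype.card_fin]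
    have c2 : Fintype.card {z : Fin n // z ∉ Set.range c} = n - a := by
      rw [Fintype.card_subtype_compl]
      congr 1
      · exact Fintype.card_fin n
      · rw [show Fintype.card {z : Fin n // z ∈ Set.range c} =
            Fintype.card (Set.range c) from rfl,
          ← Fintype.card_congr (Equiv.ofInjective c hcinj), Fintype.card_fin]
    rw [c1, c2]

lemma main_bound (h hc n : ℕ) (hh : 1 ≤ h) (hhc : hc ≤ h) (hn : 27 ^ (h ^ 2) ≤ n)
    (χ : Sym2 (Fin n) → Fin 3) (col : Fin 3) (H : SimpleGraph (Fin hc))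
    (hA : n.descFactorial (3 ^ (3 * h - 2)) ≤
      3 * (Finset.univ.filter (fun f : Fin (3 ^ (3 * h - 2)) ↪ Fin n =>
        ∃ T : Finset (Fin (3 ^ (3 * h - 2))), T.card = h ∧
          ∀ v ∈ T, ∀ w ∈ T, v ≠ w → χ s(f v, f w) = col)).card) :
    n.descFactorial hc ≤ 27 ^ (h ^ 2) * colorCopies H χ col := by
  classical
  set t := 3 ^ (3 * h - 2) with ht
  have h27 : (27 : ℕ) ^ (h ^ 2) = 3 ^ (3 * h ^ 2) := by
    rw [show (27 : ℕ) = 3 ^ 3 by norm_num, ← pow_mul]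
  have hexp : 3 * h - 2 ≤ 3 * h ^ 2 :=
    le_trans (Nat.sub_le _ _) (Nat.mul_le_mul_left _ (Nat.le_self_pow (by norm_num) h))
  have htn : t ≤ n := le_trans (by rw [h27]; exact Nat.pow_le_pow_right (by norm_num) hexp) hn
  have hht : h ≤ t := le_trans (Nat.le_of_lt (Nat.lt_pow_self (n := h) (a := 3) (by norm_num)))
    (Nat.pow_le_pow_right (by norm_num) (by omega))
  have hct : hc ≤ t := hhc.trans hht
  set A := (Finset.univ.filter (fun f : Fin t ↪ Fin n =>
    ∃ T : Finset (Fin t), T.card = h ∧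
      ∀ v ∈ T, ∀ w ∈ T, v ≠ w → χ s(f v, f w) = col)) with hAdef
  set P := (Finset.univ.filter (fun p : (Fin t ↪ Fin n) × (Fin h ↪ Fin t) =>
    ∀ v w : Fin h, v ≠ w → χ s(p.1 (p.2 v), p.1 (p.2 w)) = col)) with hPdef
  -- Step 1 : A.card ≤ P.card
  have hAP : A.card ≤ P.card := by
    apply Finset.card_le_card_of_surjOn Prod.fst
    intro f hf
    simp only [hAdef, Finset.coe_filter, Set.mem_setOf_eq, Finset.mem_univ, true_and] at hf
    obtain ⟨T, hTcard, hTmono⟩ := hf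
    set σ : Fin h ↪ Fin t :=
      (T.orderIsoOfFin hTcard).toEquiv.toEmbedding.trans (Function.Embedding.subtype _) with hσ
    refine ⟨(f, σ), ?_, rfl⟩
    simp only [hPdef, Finset.coe_filter, Set.mem_setOf_eq, Finset.mem_univ, true_and]
    intro v w hvw
    exact hTmono (σ v) (by simp [hσ]) (σ w) (by simp [hσ]) (fun hE => hvw (σ.injective hE))
  -- the projection map
  set φ : (Fin t ↪ Fin n) × (Fin h ↪ Fin t) → (Fin hc → Fin n) :=
    fun p => (fun v : Fin hc => p.1 (p.2 (Fin.castLE hhc v))) with hφ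
  -- Step 2 : fiber bound
  have hPK : P.card ≤ (t.descFactorial h * (n - hc).descFactorial (t - hc)) * (P.image φ).card := by
    apply Finset.card_le_mul_card_image
    intro g hg
    have hfib : (P.filter fun p => φ p = g).card =
        ∑ σ : Fin h ↪ Fin t, ((P.filter fun p => φ p = g).filter fun p => p.2 = σ).card :=
      Finset.card_eq_sum_card_fiberwise (fun p _ => Finset.mem_univ _)
    rw [hfib]
    calc ∑ σ : Fin h ↪ Fin t, ((P.filter fun p => φ p = g).filter fun p => p.2 = σ).card
        ≤ ∑ _σ : Fin h ↪ Fin t, (n - hc).descFactorial (t - hc) := by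
          apply Finset.sum_le_sum
          intro σ _
          refine le_trans (Finset.card_le_card_of_injOn Prod.fst ?_ ?_)
            (ext_count t n hc ((Fin.castLEEmb hhc).trans σ) g)
          · intro p hp
            simp only [Finset.mem_coe, Finset.mem_filter, Finset.mem_univ, true_and] at hp ⊢
            obtain ⟨⟨_, hpg⟩, hpσ⟩ := hp
            intro x
            have : ((Fin.castLEEmb hhc).trans σ) x = σ (Fin.castLE hhc x) := rfl
            rw [this, ← hpσ, ← hpg]
          · intro p hp q hq hpq
            simp only [Finset.coe_filter, Set.mem_setOf_eq] at hp hq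
            exact Prod.ext hpq (hp.2.trans hq.2.symm)
      _ = t.descFactorial h * (n - hc).descFactorial (t - hc) := by
          rw [Finset.sum_const, Finset.card_univ, Fintype.card_embedding_eq, Fintype.card_fin,
            Fintype.card_fin, smul_eq_mul]
  -- Step 3 : image lands in copies
  set C := (Finset.univ.filter (fun f : Fin hc → Fin n =>
    Function.Injective f ∧ ∀ v w, H.Adj v w → χ s(f v, f w) = col)) with hCdef
  have himg : P.image φ ⊆ C := by
    intro g hg
    obtain ⟨p, hp, rfl⟩ := Finset.mem_image.mp hg
    simp only [hPdef, Finset.mem_filter, Finset.mem_univ, true_and] at hp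
    simp only [hCdef, Finset.mem_filter, Finset.mem_univ, true_and]
    constructor
    · intro v w hvw
      exact Fin.castLE_injective hhc (p.2.injective (p.1.injective hvw))
    · intro v w hadj
      exact hp _ _ (fun hE => hadj.ne (Fin.castLE_injective hhc hE))
  have hCC : colorCopies H χ col = C.card := by
    unfold colorCopies colorCopiesIn
    rw [show {f : Fin hc → Fin n | Function.Injective f ∧ (∀ v, f v ∈ Set.univ) ∧
        ∀ v w, H.Adj v w → χ s(f v, f w) = col} = ↑C by
      ext f; simp [hCdef]]
    rw [Set.ncard_coe_finset]
  -- Step 4 : arithmetic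
  set D := (n - hc).descFactorial (t - hc) with hD
  have hsplit : n.descFactorial t = n.descFactorial hc * D := by
    exact (Nat.descFactorial_mul_descFactorial hct).symm.trans (mul_comm _ _)
  have hkey : 3 * t.descFactorial h ≤ 27 ^ (h ^ 2) := by
    calc 3 * t.descFactorial h ≤ 3 * t ^ h :=
          Nat.mul_le_mul_left _ (Nat.descFactorial_le_pow _ _)
      _ = 3 ^ (1 + (3 * h - 2) * h) := by rw [ht, ← pow_mul, pow_add, pow_one]
      _ ≤ 3 ^ (3 * h ^ 2) := by
          apply Nat.pow_le_pow_right (by norm_num)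
          obtain ⟨m, hm⟩ : ∃ m, m + 2 = 3 * h := ⟨3 * h - 2, by omega⟩
          rw [show 3 * h - 2 = m by omega]
          have e1 : m * h + 2 * h = 3 * (h * h) := by
            calc m * h + 2 * h = (m + 2) * h := by ring
              _ = 3 * h * h := by rw [hm]
              _ = 3 * (h * h) := by ring
          rw [sq]
          linarith [e1, hh, Nat.le_mul_of_pos_left h (show 0 < h by omega)]
      _ = 27 ^ (h ^ 2) := h27.symm
  have hchain : n.descFactorial hc * D ≤ 27 ^ (h ^ 2) * C.card * D := by
    calc n.descFactorial hc * D = n.descFactorial t := hsplit.symm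
      _ ≤ 3 * A.card := hA
      _ ≤ 3 * P.card := Nat.mul_le_mul_left _ hAP
      _ ≤ 3 * ((t.descFactorial h * D) * (P.image φ).card) := Nat.mul_le_mul_left _ hPK
      _ ≤ 3 * ((t.descFactorial h * D) * C.card) :=
          Nat.mul_le_mul_left _ (Nat.mul_le_mul_left _ (Finset.card_le_card himg))
      _ = (3 * t.descFactorial h) * C.card * D := by ring
      _ ≤ 27 ^ (h ^ 2) * C.card * D :=
          Nat.mul_le_mul_right _ (Nat.mul_le_mul_right _ hkey)
  have hDpos : 0 < D := by
    apply Nat.pos_of_ne_zero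
    intro h0
    rw [hD, Nat.descFactorial_eq_zero_iff_lt] at h0
    omega
  rw [hCC]
  exact Nat.le_of_mul_le_mul_right hchain hDpos

lemma nat_to_real (h cp dn : ℕ) (hle : dn ≤ 27 ^ (h ^ 2) * cp) :
    (27 : ℝ) ^ (-(h ^ 2 : ℤ)) * (dn : ℝ) ≤ (cp : ℝ) := by
  have h27 : (0 : ℝ) < (27 : ℝ) ^ ((h : ℤ) ^ 2) := by positivity
  rw [zpow_neg, inv_mul_le_iff₀ h27]
  have hcast : (27 : ℝ) ^ ((h : ℤ) ^ 2) = ((27 ^ (h ^ 2) : ℕ) : ℝ) := by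
    rw [show ((h : ℤ) ^ 2) = ((h ^ 2 : ℕ) : ℤ) by push_cast; ring, zpow_natCast]
    push_cast
    ring
  rw [hcast]
  exact_mod_cast hle

theorem statement16 (h h1 h2 h3 : ℕ) (hh1 : h1 ≤ h) (hh2 : h2 ≤ h) (hh3 : h3 ≤ h)
    (H1 : SimpleGraph (Fin h1)) (H2 : SimpleGraph (Fin h2)) (H3 : SimpleGraph (Fin h3))
    (n : ℕ) (hn : 27 ^ (h ^ 2) ≤ n) (χ : Sym2 (Fin n) → Fin 3) :
    (27 : ℝ) ^ (-(h ^ 2 : ℤ)) * (n.descFactorial h1 : ℝ) ≤ (colorCopies H1 χ 0 : ℝ) ∨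
    (27 : ℝ) ^ (-(h ^ 2 : ℤ)) * (n.descFactorial h2 : ℝ) ≤ (colorCopies H2 χ 1 : ℝ) ∨
    (27 : ℝ) ^ (-(h ^ 2 : ℤ)) * (n.descFactorial h3 : ℝ) ≤ (colorCopies H3 χ 2 : ℝ) := by

  classical
  by_cases hzero : h = 0
  · left
    have h10 : h1 = 0 := by omega
    subst h10; subst hzero
    have hcc : colorCopies H1 χ 0 = 1 := by
      unfold colorCopies colorCopiesIn
      have hset : {f : Fin 0 → Fin n | Function.Injective f ∧ (∀ v, f v ∈ Set.univ) ∧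
          ∀ v w, H1.Adj v w → χ s(f v, f w) = 0} = Set.univ :=
        Set.eq_univ_of_forall fun f =>
          ⟨fun a b _ => Subsingleton.elim a b, fun _ => trivial, fun v _ _ => v.elim0⟩
      rw [hset, Set.ncard_univ, Nat.card_eq_fintype_card]
      simp
    rw [hcc]
    norm_num
  · have hh : 1 ≤ h := by omega
    set t := 3 ^ (3 * h - 2) with ht
    set A : Fin 3 → Finset (Fin t ↪ Fin n) := fun col =>
      (Finset.univ.filter (fun f : Fin t ↪ Fin n =>
        ∃ T : Finset (Fin t), T.card = h ∧
          ∀ v ∈ T, ∀ w ∈ T, v ≠ w → χ s(f v, f w) = col)) with hAdef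
    have hcover : ∀ f : Fin t ↪ Fin n, ∃ col, f ∈ A col := by
      intro f
      obtain ⟨col, T, _, hTcard, hTmono⟩ := ramsey_aux (3 * h) t
        (fun e => χ (e.map f)) (fun _ => h) Finset.univ (by show h + h + h ≤ 3 * h; omega)
        (fun _ => hh)
        (by
          show 3 ^ (h + h + h - 2) ≤ _
          rw [Finset.card_univ, Fintype.card_fin]
          exact le_of_eq (by rw [show h + h + h - 2 = 3 * h - 2 by omega]))
      refine ⟨col, Finset.mem_filter.mpr ⟨Finset.mem_univ _, T, hTcard, ?_⟩⟩
      intro v hv w hw hvw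
      have := hTmono v hv w hw hvw
      rwa [Sym2.map_pair_eq] at this
    have hpig : ∃ col, n.descFactorial t ≤ 3 * (A col).card := by
      have hU : (Finset.univ : Finset (Fin t ↪ Fin n)).card = n.descFactorial t := by
        rw [Finset.card_univ, Fintype.card_embedding_eq, Fintype.card_fin, Fintype.card_fin]
      have hsub : (Finset.univ : Finset (Fin t ↪ Fin n)) ⊆ Finset.univ.biUnion A :=
        fun f _ => Finset.mem_biUnion.mpr (let ⟨c, hc⟩ := hcover f; ⟨c, Finset.mem_univ _, hc⟩)
      have hle := (Finset.card_le_card hsub).trans Finset.card_biUnion_le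
      rw [hU, Fin.sum_univ_three] at hle
      by_contra hcon
      push_neg at hcon
      have := hcon 0; have := hcon 1; have := hcon 2
      omega
    obtain ⟨col, hcol⟩ := hpig
    fin_cases col
    · exact Or.inl (nat_to_real _ _ _ (main_bound h h1 n hh hh1 hn χ 0 H1 hcol))
    · exact Or.inr (Or.inl (nat_to_real _ _ _ (main_bound h h2 n hh hh2 hn χ 1 H2 hcol)))
    · exact Or.inr (Or.inr (nat_to_real _ _ _ (main_bound h h3 n hh hh3 hn χ 2 H3 hcol)))
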